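/- arXiv:1801.06974 — 8 statements merged into one kernel-verified Lean document; each statement's English description precedes it below -/
import Mathlib

section
/- Every finitely generated FC-group is virtually abelian: if G is a finitely generated group in which every conjugacy class is finite, then G contains an abelian subgroup of finite index. -/
lemma centralizer_zpowers_eq {G : Type*} [Group G] (g : G) :
    Subgroup.centralizer (Subgroup.zpowers g : Set G) = Subgroup.centralizer {g} := by
  apply le_antisymm
  · exact Subgroup.centralizer_le (by simp)
  · intro x hx
    rw [Subgroup.mem_centralizer_iff] at hx ⊢
    rintro - ⟨n, rfl⟩
    have hg : g * x = x * g := hx g rfl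
    exact (Commute.zpow_left (a := g) (b := x) hg n)

lemma centralizer_finiteIndex {G : Type*} [Group G]
    (hFC : ∀ g : G, {h : G | IsConj g h}.Finite) (g : G) :
    (Subgroup.centralizer ({g} : Set G)).FiniteIndex := by
  constructor
  rw [show (Subgroup.centralizer ({g} : Set G)).index = (MulAction.stabilizer (ConjAct G) g).index from (by
      rw [Subgroup.centralizer_eq_comap_stabilizer]
      exact Subgroup.index_comap_of_surjective _ (MulEquiv.surjective _)),
    MulAction.index_stabilizer]
  have hfin : (MulAction.orbit (ConjAct G) g).Finite := by
    apply (hFC g).subset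
    intro h hh
    rw [ConjAct.mem_orbit_conjAct] at hh  -- ? maybe named differently
    exact hh.symm
  have hne : (MulAction.orbit (ConjAct G) g).Nonempty := ⟨g, MulAction.mem_orbit_self g⟩
  simpa [Set.ncard_eq_zero hfin] using hne.ne_empty

/-- **Every finitely generated FC-group is virtually abelian.**
If `G` is a finitely generated group in which every conjugacy class is finite,
then `G` contains an abelian (commutative) subgroup of finite index. -/
theorem stmt_3 {G : Type*} [Group G] (hfg : Group.FG G)
    (hFC : ∀ g : G, {h : G | IsConj g h}.Finite) :
    ∃ H : Subgroup G, H.FiniteIndex ∧ ∀ a ∈ H, ∀ b ∈ H, a * b = b * a := by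
  refine ⟨Subgroup.center G, ?_, fun a ha b hb => ?_⟩
  · obtain ⟨S, hS⟩ := hfg.1
    rw [Subgroup.center_eq_iInf hS]
    have : ∀ s : S, (Subgroup.centralizer (Subgroup.zpowers (s : G) : Set G)).FiniteIndex := by
      intro s
      rw [centralizer_zpowers_eq]
      exact centralizer_finiteIndex hFC s
    rw [← iInf_subtype'']
    exact Subgroup.finiteIndex_iInf fun s => by simpa [centralizer_zpowers_eq] using this s
  · exact Subgroup.mem_center_iff.mp hb a
end

section
/- Every torsion-free FC-group is abelian: if G is a group in which every element has trivial torsion (only the identity has finite order) and every conjugacy class of G is finite, then G is commutative. -/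
open Subgroup
open scoped commutatorElement

private lemma aux_commutator_central_left {G : Type*} [Group G] (x y z : G)
    (hz : z ∈ Subgroup.center G) : ⁅x * z, y⁆ = ⁅x, y⁆ := by
  have h1 : y * z = z * y := Subgroup.mem_center_iff.mp hz y
  have hzy : z * y * z⁻¹ = y := by rw [← h1, mul_inv_cancel_right]
  have key : x * z * y * (x * z)⁻¹ * y⁻¹ = x * (z * y * z⁻¹) * x⁻¹ * y⁻¹ := by group
  rw [commutatorElement_def, commutatorElement_def, key, hzy]

private lemma aux_commutator_central_right {G : Type*} [Group G] (x y w : G)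
    (hw : w ∈ Subgroup.center G) : ⁅x, y * w⁆ = ⁅x, y⁆ := by
  have h1 : x⁻¹ * w = w * x⁻¹ := Subgroup.mem_center_iff.mp hw x⁻¹
  have hwx : w * x⁻¹ * w⁻¹ = x⁻¹ := by rw [← h1, mul_inv_cancel_right]
  have key : x * (y * w) * x⁻¹ * (y * w)⁻¹ = x * y * (w * x⁻¹ * w⁻¹) * y⁻¹ := by group
  rw [commutatorElement_def, commutatorElement_def, key, hwx]

private lemma aux_finite_commutatorSet {G : Type*} [Group G]
    [Finite (G ⧸ Subgroup.center G)] : Finite (commutatorSet G) := by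
  have : commutatorSet G ⊆ Set.range
      (fun p : (G ⧸ Subgroup.center G) × (G ⧸ Subgroup.center G) =>
        ⁅p.1.out, p.2.out⁆) := by
    rintro g ⟨x, y, rfl⟩
    refine ⟨(QuotientGroup.mk x, QuotientGroup.mk y), ?_⟩
    obtain ⟨z, hz⟩ := QuotientGroup.mk_out_eq_mul (Subgroup.center G) x
    obtain ⟨w, hw⟩ := QuotientGroup.mk_out_eq_mul (Subgroup.center G) y
    simp only [hz, hw]
    rw [aux_commutator_central_left _ _ _ z.2, aux_commutator_central_right _ _ _ w.2]
  exact ((Set.finite_range _).subset this).to_subtype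

private lemma aux_centralizer_finiteIndex {G : Type*} [Group G] (g : G)
    (hfin : {h : G | IsConj g h}.Finite) :
    (Subgroup.centralizer ({g} : Set G)).FiniteIndex := by
  constructor
  rw [show (Subgroup.centralizer ({g} : Set G)).index = (MulAction.orbit (ConjAct G) g).ncard by
    rw [Subgroup.centralizer_eq_comap_stabilizer, ← MulAction.index_stabilizer]
    exact Subgroup.index_comap_of_surjective (H := MulAction.stabilizer (ConjAct G) g)
      (f := ConjAct.toConjAct.toMonoidHom) ConjAct.toConjAct.surjective]
  have horb : MulAction.orbit (ConjAct G) g ⊆ {h : G | IsConj g h} := by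
    intro h hh
    exact (ConjAct.mem_orbit_conjAct.mp hh).symm
  have hfin' : (MulAction.orbit (ConjAct G) g).Finite := hfin.subset horb
  have hne : (MulAction.orbit (ConjAct G) g).Nonempty := ⟨g, MulAction.mem_orbit_self g⟩
  rw [Ne, Set.ncard_eq_zero hfin']
  exact hne.ne_empty

/-- **Every torsion-free FC-group is abelian.**
If `G` is a torsion-free group (only the identity has finite order) in which every
conjugacy class is finite, then `G` is commutative. -/
theorem stmt_4 {G : Type*} [Group G] (htf : ∀ g : G, IsOfFinOrder g → g = 1)
    (hFC : ∀ g : G, {h : G | IsConj g h}.Finite) :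
    ∀ a b : G, a * b = b * a := by
  intro a b
  set H : Subgroup G := Subgroup.closure {a, b} with hH
  have ha : a ∈ H := Subgroup.subset_closure (by simp)
  have hb : b ∈ H := Subgroup.subset_closure (by simp)
  -- the center of H has finite index in H
  haveI hia : (Subgroup.centralizer ({a} : Set G)).FiniteIndex :=
    aux_centralizer_finiteIndex a (hFC a)
  haveI hib : (Subgroup.centralizer ({b} : Set G)).FiniteIndex :=
    aux_centralizer_finiteIndex b (hFC b)
  haveI : ((Subgroup.centralizer ({a} : Set G) ⊓
      Subgroup.centralizer ({b} : Set G)).subgroupOf H).FiniteIndex :=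
    Subgroup.instFiniteIndex_subgroupOf _ _
  have hle : (Subgroup.centralizer ({a} : Set G) ⊓
      Subgroup.centralizer ({b} : Set G)).subgroupOf H ≤ Subgroup.center H := by
    intro h hh
    rw [Subgroup.mem_subgroupOf, Subgroup.mem_inf] at hh
    obtain ⟨hha, hhb⟩ := hh
    have hcomm : H ≤ Subgroup.centralizer ({(h : G)} : Set G) := by
      apply (Subgroup.closure_le _).mpr
      rintro x hx
      rw [SetLike.mem_coe, Subgroup.mem_centralizer_iff]
      rintro y rfl
      rcases hx with rfl | rfl
      · exact (Subgroup.mem_centralizer_iff.mp hha x rfl).symm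
      · exact (Subgroup.mem_centralizer_iff.mp hhb x rfl).symm
    rw [Subgroup.mem_center_iff]
    intro k
    have := (hcomm k.2) (h : G) rfl
    exact Subtype.ext (by simpa using this.symm)
  haveI : (Subgroup.center H).FiniteIndex := Subgroup.finiteIndex_of_le hle
  haveI : Finite (H ⧸ Subgroup.center H) := Subgroup.finite_quotient_of_finiteIndex
  haveI : Finite (commutatorSet H) := aux_finite_commutatorSet
  haveI : Finite (commutator H) := inferInstance
  -- the commutator of a and b, as an element of H
  set a' : H := ⟨a, ha⟩
  set b' : H := ⟨b, hb⟩
  have hc : ⁅a', b'⁆ ∈ commutator H :=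
    Subgroup.commutator_mem_commutator (Subgroup.mem_top a') (Subgroup.mem_top b')
  have hfin : IsOfFinOrder (⁅a', b'⁆ : H) := by
    exact (commutator H).subtype.isOfFinOrder
      (isOfFinOrder_of_finite (⟨⁅a', b'⁆, hc⟩ : commutator H))
  have hfinG : IsOfFinOrder ((⁅a', b'⁆ : H) : G) := H.subtype.isOfFinOrder hfin
  have hcoe : ((⁅a', b'⁆ : H) : G) = ⁅a, b⁆ := by
    simp [commutatorElement_def, a', b']
  rw [hcoe] at hfinG
  have := htf _ hfinG
  exact commutatorElement_eq_one_iff_mul_comm.mp this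
end

section
/- Let G be a torsion-free group. Then the FC-centre of G, i.e., the set A = {g ∈ G | the conjugacy class of g in G is finite}, is a normal abelian subgroup of G. -/
private lemma fc_finiteIndex_centralizer {G : Type*} [Group G] {a : G}
    (ha : {h : G | IsConj a h}.Finite) : (Subgroup.centralizer {a}).FiniteIndex := by
  have horb : (MulAction.orbit (ConjAct G) a).Finite := by
    have heq : MulAction.orbit (ConjAct G) a = {h : G | IsConj a h} := by
      ext h; rw [Set.mem_setOf_eq, ConjAct.mem_orbit_conjAct, isConj_comm]
    rw [heq]; exact ha
  have _ : Finite (MulAction.orbit (ConjAct G) a) := horb.to_subtype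
  have _ : Finite (ConjAct G ⧸ MulAction.stabilizer (ConjAct G) a) :=
    Finite.of_equiv _ (MulAction.orbitEquivQuotientStabilizer (ConjAct G) a)
  have hs : (MulAction.stabilizer (ConjAct G) a).FiniteIndex :=
    Subgroup.finiteIndex_of_finite_quotient
  constructor
  rw [Subgroup.centralizer_eq_comap_stabilizer]
  exact (Subgroup.index_comap_of_surjective (MulAction.stabilizer (ConjAct G) a)
    (f := (ConjAct.toConjAct (G := G)).toMonoidHom) (ConjAct.toConjAct (G := G)).surjective).trans_ne
    hs.index_ne_zero

open scoped commutatorElement in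
private lemma fc_comm {G : Type*} [Group G] (htf : ∀ g : G, IsOfFinOrder g → g = 1)
    {a b : G} (ha : {h : G | IsConj a h}.Finite) (hb : {h : G | IsConj b h}.Finite) :
    a * b = b * a := by
  haveI hfa := fc_finiteIndex_centralizer ha
  haveI hfb := fc_finiteIndex_centralizer hb
  set L := Subgroup.centralizer {a} ⊓ Subgroup.centralizer {b} with hL
  haveI : L.FiniteIndex := inferInstance
  set H := Subgroup.closure ({a, b} : Set G) with hH
  haveI : (L.subgroupOf H).FiniteIndex := inferInstance
  have hle : L.subgroupOf H ≤ Subgroup.center ↥H := by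
    intro x hx
    rw [Subgroup.mem_subgroupOf, hL, Subgroup.mem_inf] at hx
    have hsub : H ≤ Subgroup.centralizer {(x : G)} := by
      refine le_trans (le_of_eq hH) ?_
      rw [Subgroup.closure_le]
      rintro m (rfl | rfl)
      · intro n hn
        rw [Set.mem_singleton_iff] at hn
        subst hn
        exact (Subgroup.mem_centralizer_iff.mp hx.1 m rfl).symm
      · intro n hn
        rw [Set.mem_singleton_iff] at hn
        subst hn
        exact (Subgroup.mem_centralizer_iff.mp hx.2 m rfl).symm
    rw [Subgroup.mem_center_iff]
    intro y
    exact Subtype.ext (Subgroup.mem_centralizer_iff.mp (hsub y.2) (x : G) rfl).symm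
  haveI : (Subgroup.center ↥H).FiniteIndex := Subgroup.finiteIndex_of_le hle
  have hamem : a ∈ H := Subgroup.subset_closure (by simp)
  have hbmem : b ∈ H := Subgroup.subset_closure (by simp)
  set a' : ↥H := ⟨a, hamem⟩ with ha'
  set b' : ↥H := ⟨b, hbmem⟩ with hb'
  set n := (Subgroup.center ↥H).index with hn
  have key : (MonoidHom.transferCenterPow ↥H) ⁅a', b'⁆ = 1 := by
    rw [map_commutatorElement, commutatorElement_eq_one_iff_mul_comm]
    exact Subtype.ext (Subgroup.mem_center_iff.mp (MonoidHom.transferCenterPow ↥H b').2 _)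
  have key2 : (⁅a', b'⁆ : ↥H) ^ n = 1 := by
    have := congrArg (Subtype.val) key
    rw [MonoidHom.transferCenterPow_apply] at this
    simpa using this
  have key3 : (a * b * a⁻¹ * b⁻¹) ^ n = 1 := by
    have := congrArg (Subtype.val) key2
    push_cast at this
    simpa [commutatorElement_def] using this
  have hfo : IsOfFinOrder (a * b * a⁻¹ * b⁻¹) :=
    isOfFinOrder_iff_pow_eq_one.mpr
      ⟨n, Nat.pos_of_ne_zero Subgroup.FiniteIndex.index_ne_zero, key3⟩
  have h1 : a * b * a⁻¹ * b⁻¹ = 1 := htf _ hfo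
  have := commutatorElement_eq_one_iff_mul_comm.mp (by simpa [commutatorElement_def] using h1)
  exact this

/-- **The FC-centre of a torsion-free group is a normal abelian subgroup.**
Let `G` be a torsion-free group.  Then the set of elements of `G` whose conjugacy
class is finite is (the carrier of) a normal abelian subgroup of `G`. -/
theorem stmt_5 {G : Type*} [Group G] (htf : ∀ g : G, IsOfFinOrder g → g = 1) :
    ∃ A : Subgroup G,
      (A : Set G) = {g : G | {h : G | IsConj g h}.Finite} ∧
      A.Normal ∧ ∀ a ∈ A, ∀ b ∈ A, a * b = b * a := by
  refine ⟨{ carrier := {g : G | {h : G | IsConj g h}.Finite}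
            one_mem' := ?_
            mul_mem' := ?_
            inv_mem' := ?_ }, rfl, ?_, ?_⟩
  · intro a b ha hb
    apply (Set.Finite.image2 (· * ·) ha hb).subset
    intro h hh
    rw [Set.mem_setOf_eq, isConj_iff] at hh
    obtain ⟨c, rfl⟩ := hh
    exact ⟨c * a * c⁻¹, isConj_iff.mpr ⟨c, rfl⟩, c * b * c⁻¹, isConj_iff.mpr ⟨c, rfl⟩, by group⟩
  · apply Set.Finite.subset (Set.finite_singleton 1)
    intro h hh
    rw [Set.mem_setOf_eq, isConj_iff] at hh
    obtain ⟨c, rfl⟩ := hh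
    simp
  · intro a ha
    apply (ha.image (·⁻¹)).subset
    intro h hh
    rw [Set.mem_setOf_eq, isConj_iff] at hh
    obtain ⟨c, rfl⟩ := hh
    exact ⟨c * a * c⁻¹, isConj_iff.mpr ⟨c, rfl⟩, by group⟩
  · constructor
    intro m hm g
    apply hm.subset
    intro h hh
    exact (isConj_iff.mpr ⟨g, rfl⟩ : IsConj m (g * m * g⁻¹)).trans hh
  · intro a ha b hb
    exact fc_comm htf ha hb
end

section
/- Let G and G' be torsion-free finitely generated nilpotent groups of nilpotency class at most 2, and for such a group G let c_G : G/Z(G) × G/Z(G) → Z(G) denote the (well-defined) commutator pairing c_G(g Z(G), h Z(G)) = [g, h] = g⁻¹h⁻¹gh. Then G and G' are isomorphic if and only if there exist group isomorphisms φ : Z(G) → Z(G') and ψ : G/Z(G) → G'/Z(G') such that c_{G'}(ψ(x), ψ(y)) = φ(c_G(x, y)) for all x, y ∈ G/Z(G). -/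
open scoped commutatorElement

section ClassTwo

variable {G : Type*} [Group G]

variable (h2 : ∀ g h : G, ⁅g, h⁆ ∈ Subgroup.center G)

include h2

private lemma c2_mul_left (a b c : G) : ⁅a * b, c⁆ = ⁅a, c⁆ * ⁅b, c⁆ := by
  have hc := Subgroup.mem_center_iff.mp (h2 b c)
  have hc' := Subgroup.mem_center_iff.mp (h2 a c)
  have key : ⁅a * b, c⁆ = a * ⁅b, c⁆ * a⁻¹ * ⁅a, c⁆ := by
    simp only [commutatorElement_def]; group
  rw [key, hc a, show ⁅b, c⁆ * a * a⁻¹ * ⁅a, c⁆ = ⁅b, c⁆ * ⁅a, c⁆ from by group,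
    hc' ⁅b, c⁆]

private lemma c2_mul_right (a b c : G) : ⁅a, b * c⁆ = ⁅a, b⁆ * ⁅a, c⁆ := by
  have hc := Subgroup.mem_center_iff.mp (h2 a c)
  have key : ⁅a, b * c⁆ = ⁅a, b⁆ * (b * ⁅a, c⁆ * b⁻¹) := by
    simp only [commutatorElement_def]; group
  rw [key, hc b]; group

private lemma c2_inv_right (a c : G) : ⁅a, c⁻¹⁆ = ⁅a, c⁆⁻¹ := by
  have h := c2_mul_right h2 a c c⁻¹
  rw [mul_inv_cancel, commutatorElement_one_right] at h
  exact eq_inv_of_mul_eq_one_right h.symm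

private lemma c2_inv_left (a c : G) : ⁅a⁻¹, c⁆ = ⁅a, c⁆⁻¹ := by
  have h := c2_mul_left h2 a a⁻¹ c
  rw [mul_inv_cancel, commutatorElement_one_left] at h
  exact eq_inv_of_mul_eq_one_right h.symm

private lemma conj_eq_mul_comm (x y : G) : y⁻¹ * x * y = x * ⁅x, y⁆ := by
  have key : y⁻¹ * x * y = x * ⁅x⁻¹, y⁻¹⁆ := by
    simp only [commutatorElement_def]; group
  rw [key, c2_inv_left h2, c2_inv_right h2, inv_inv]

private lemma c2_zpow_right (a c : G) (m : ℤ) : ⁅a, c ^ m⁆ = ⁅a, c⁆ ^ m := by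
  induction m using Int.induction_on with
  | zero => simp
  | succ n ih => rw [zpow_add_one, c2_mul_right h2, ih, ← zpow_add_one]
  | pred n ih => rw [zpow_sub_one, c2_mul_right h2, ih, c2_inv_right h2, ← zpow_sub_one]

private lemma c2_zpow_left (a c : G) (m : ℤ) : ⁅a ^ m, c⁆ = ⁅a, c⁆ ^ m :=
  calc ⁅a ^ m, c⁆ = ⁅c, a ^ m⁆⁻¹ := (commutatorElement_inv c (a ^ m)).symm
    _ = (⁅c, a⁆ ^ m)⁻¹ := by rw [c2_zpow_right h2]
    _ = (⁅c, a⁆⁻¹) ^ m := by rw [inv_zpow]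
    _ = ⁅a, c⁆ ^ m := by rw [commutatorElement_inv]

omit h2

private lemma c2_central_left {z : G} (hz : z ∈ Subgroup.center G) (b : G) : ⁅z, b⁆ = 1 :=
  commutatorElement_eq_one_iff_mul_comm.mpr (Subgroup.mem_center_iff.mp hz b).symm

private lemma c2_central_right {z : G} (hz : z ∈ Subgroup.center G) (a : G) : ⁅a, z⁆ = 1 :=
  commutatorElement_eq_one_iff_mul_comm.mpr (Subgroup.mem_center_iff.mp hz a)

include h2

private lemma c2_mul_central (a b z w : G) (hz : z ∈ Subgroup.center G)
    (hw : w ∈ Subgroup.center G) : ⁅a * z, b * w⁆ = ⁅a, b⁆ := by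
  rw [c2_mul_left h2, c2_central_left hz, mul_one, c2_mul_right h2, c2_central_right hw, mul_one]

end ClassTwo
section Word

variable {G : Type*} [Group G] {ι : Type*}

private def wordProd (g : ι → G) (l : List ι) (v : ι → ℤ) : G :=
  (l.map fun i => g i ^ v i).prod

private lemma wordProd_nil (g : ι → G) (v : ι → ℤ) : wordProd g [] v = 1 := rfl

private lemma wordProd_cons (g : ι → G) (i : ι) (l : List ι) (v : ι → ℤ) :
    wordProd g (i :: l) v = g i ^ v i * wordProd g l v := by
  simp [wordProd]

private lemma wordProd_zero (g : ι → G) (l : List ι) : wordProd g l 0 = 1 := by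
  induction l with
  | nil => rfl
  | cons i l ih => rw [wordProd_cons, ih]; simp

private lemma wordProd_map {H : Type*} [Group H] (f : G →* H) (g : ι → G) (l : List ι)
    (v : ι → ℤ) : f (wordProd g l v) = wordProd (fun i => f (g i)) l v := by
  induction l with
  | nil => simp [wordProd]
  | cons i l ih => rw [wordProd_cons, wordProd_cons, map_mul, map_zpow, ih]

private lemma ofMul_wordProd {A : Type*} [CommGroup A] (c : ι → A) (l : List ι) (v : ι → ℤ) :
    Additive.ofMul (wordProd c l v) = (l.map fun i => v i • Additive.ofMul (c i)).sum := by
  induction l with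
  | nil => simp [wordProd]
  | cons i l ih =>
    rw [wordProd_cons, List.map_cons, List.sum_cons, ← ih, ← ofMul_zpow, ← ofMul_mul]

variable {G' : Type*} [Group G']

private def wq (g : ι → G) (l : List ι) (v w : ι → ℤ) : G :=
  (wordProd g l (v + w))⁻¹ * wordProd g l v * wordProd g l w

variable (h2 : ∀ g h : G, ⁅g, h⁆ ∈ Subgroup.center G)
variable (h2' : ∀ g h : G', ⁅g, h⁆ ∈ Subgroup.center G')

include h2 h2' in
private lemma word_comm_transport (Φ : Subgroup.center G →* G') (g : ι → G) (g' : ι → G')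
    (y : G) (y' : G') (hbase : ∀ i, ⁅g' i, y'⁆ = Φ ⟨⁅g i, y⁆, h2 _ _⟩)
    (l : List ι) (v : ι → ℤ) :
    ⁅wordProd g' l v, y'⁆ = Φ ⟨⁅wordProd g l v, y⁆, h2 _ _⟩ := by
  induction l with
  | nil =>
    have e1 : (⟨⁅wordProd g ([] : List ι) v, y⁆, h2 _ _⟩ : Subgroup.center G) = 1 :=
      Subtype.ext (by simp [wordProd])
    rw [e1, map_one, wordProd_nil, commutatorElement_one_left]
  | cons i l ih =>
    have key' : ⁅wordProd g' (i :: l) v, y'⁆ = ⁅g' i, y'⁆ ^ v i * ⁅wordProd g' l v, y'⁆ := by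
      rw [wordProd_cons, c2_mul_left h2', c2_zpow_left h2']
    have keyval : ((⟨⁅g i, y⁆, h2 _ _⟩ ^ v i * ⟨⁅wordProd g l v, y⁆, h2 _ _⟩ :
        Subgroup.center G) : G) = ⁅wordProd g (i :: l) v, y⁆ := by
      rw [Subgroup.coe_mul, SubgroupClass.coe_zpow, wordProd_cons, c2_mul_left h2,
        c2_zpow_left h2]
    have keyG : (⟨⁅wordProd g (i :: l) v, y⁆, h2 _ _⟩ : Subgroup.center G)
        = ⟨⁅g i, y⁆, h2 _ _⟩ ^ v i * ⟨⁅wordProd g l v, y⁆, h2 _ _⟩ :=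
      Subtype.ext keyval.symm
    rw [key', keyG, map_mul, map_zpow, ← hbase i, ih]

include h2 in
private lemma wq_cons (g : ι → G) (i : ι) (l : List ι) (v w : ι → ℤ) :
    wq g (i :: l) v w = wq g l v w * ⁅wordProd g l v, g i ^ w i⁆ := by
  have hc := Subgroup.mem_center_iff.mp (h2 (wordProd g l v) (g i ^ w i))
  have hu := conj_eq_mul_comm h2 (wordProd g l v) (g i ^ w i)
  have main : ∀ P B C x y u : G, (∀ t, t * u = u * t) → (y⁻¹ * B * y = B * u) →
      (x * y * P)⁻¹ * (x * B) * (y * C) = P⁻¹ * B * C * u := by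
    intro P B C x y u hcc hconj
    calc (x * y * P)⁻¹ * (x * B) * (y * C) = P⁻¹ * (y⁻¹ * B * y) * C := by group
      _ = P⁻¹ * (B * u) * C := by rw [hconj]
      _ = P⁻¹ * B * (u * C) := by group
      _ = P⁻¹ * B * (C * u) := by rw [← hcc C]
      _ = P⁻¹ * B * C * u := by group
  have hsplit : g i ^ (v + w) i = g i ^ v i * g i ^ w i := by
    rw [Pi.add_apply, zpow_add]
  simp only [wq, wordProd_cons, hsplit]
  exact main _ _ _ _ _ _ hc hu

include h2 in
private lemma wq_mem (g : ι → G) (l : List ι) (v w : ι → ℤ) :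
    wq g l v w ∈ Subgroup.center G := by
  induction l with
  | nil =>
    have : wq g ([] : List ι) v w = 1 := by simp [wq, wordProd]
    rw [this]; exact Subgroup.one_mem _
  | cons i l ih =>
    rw [wq_cons h2]
    exact Subgroup.mul_mem _ ih (h2 _ _)

include h2 h2' in
private lemma wq_transport (Φ : Subgroup.center G →* G') (g : ι → G) (g' : ι → G')
    (hbase : ∀ i j, ⁅g' i, g' j⁆ = Φ ⟨⁅g i, g j⁆, h2 _ _⟩) (l : List ι) (v w : ι → ℤ) :
    wq g' l v w = Φ ⟨wq g l v w, wq_mem h2 g l v w⟩ := by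
  induction l with
  | nil =>
    have e1 : (⟨wq g ([] : List ι) v w, wq_mem h2 g [] v w⟩ : Subgroup.center G) = 1 :=
      Subtype.ext (by simp [wq, wordProd])
    rw [e1, map_one]
    simp [wq, wordProd]
  | cons i l ih =>
    have hb2 : ∀ j, ⁅g' j, g' i ^ w i⁆ = Φ ⟨⁅g j, g i ^ w i⁆, h2 _ _⟩ := by
      intro j
      have e2val : ((⟨⁅g j, g i⁆, h2 _ _⟩ ^ w i : Subgroup.center G) : G)
          = ⁅g j, g i ^ w i⁆ := by
        rw [SubgroupClass.coe_zpow, c2_zpow_right h2]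
      have e2 : (⟨⁅g j, g i ^ w i⁆, h2 _ _⟩ : Subgroup.center G)
          = ⟨⁅g j, g i⁆, h2 _ _⟩ ^ w i := Subtype.ext e2val.symm
      rw [e2, map_zpow, ← hbase j i, ← c2_zpow_right h2']
    have hword := word_comm_transport h2 h2' Φ g g' (g i ^ w i) (g' i ^ w i) hb2 l v
    have keyval : ((⟨wq g l v w, wq_mem h2 g l v w⟩ * ⟨⁅wordProd g l v, g i ^ w i⁆, h2 _ _⟩ :
        Subgroup.center G) : G) = wq g (i :: l) v w := by
      rw [Subgroup.coe_mul]
      exact (wq_cons h2 g i l v w).symm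
    have key : (⟨wq g (i :: l) v w, wq_mem h2 g (i :: l) v w⟩ : Subgroup.center G)
        = ⟨wq g l v w, wq_mem h2 g l v w⟩ * ⟨⁅wordProd g l v, g i ^ w i⁆, h2 _ _⟩ :=
      Subtype.ext keyval.symm
    rw [wq_cons h2', key, map_mul, ← ih, ← hword]

end Word
section Core

variable {G G' : Type*} [Group G] [Group G']

private lemma backward_core
    (h2 : ∀ g h : G, ⁅g, h⁆ ∈ Subgroup.center G)
    (h2' : ∀ g h : G', ⁅g, h⁆ ∈ Subgroup.center G')
    {n : ℕ} (gg : Fin n → G) (gg' : Fin n → G')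
    (Φ : Subgroup.center G →* G')
    (hΦcen : ∀ z, Φ z ∈ Subgroup.center G')
    (hΦinj : Function.Injective Φ)
    (hΦsurj : ∀ w ∈ Subgroup.center G', ∃ z, Φ z = w)
    (hbase : ∀ i j, ⁅gg' i, gg' j⁆ = Φ ⟨⁅gg i, gg j⁆, h2 _ _⟩)
    (V : G → Fin n → ℤ) (V' : G' → Fin n → ℤ)
    (hV1 : ∀ x, (wordProd gg (List.finRange n) (V x))⁻¹ * x ∈ Subgroup.center G)
    (hV1' : ∀ x, (wordProd gg' (List.finRange n) (V' x))⁻¹ * x ∈ Subgroup.center G')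
    (hV2 : ∀ x y, V (x * y) = V x + V y)
    (hSV : ∀ v, V (wordProd gg (List.finRange n) v) = v)
    (hVcen : ∀ c ∈ Subgroup.center G, V c = 0)
    (hindep' : ∀ v, wordProd gg' (List.finRange n) v ∈ Subgroup.center G' → v = 0) :
    Nonempty (G ≃* G') := by
  obtain ⟨F, hFdef⟩ : ∃ F : G → G', ∀ x, F x = wordProd gg' (List.finRange n) (V x) *
      Φ ⟨(wordProd gg (List.finRange n) (V x))⁻¹ * x, hV1 x⟩ := ⟨_, fun x => rfl⟩
  set l : List (Fin n) := List.finRange n with hl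
  -- homomorphism property
  have hmul : ∀ x y, F (x * y) = F x * F y := by
    intro x y
    have hc := Subgroup.mem_center_iff.mp (hV1 x)
    have central_eq : ∀ P Sv Sw c d : G, (∀ t, t * c = c * t) →
        P⁻¹ * ((Sv * c) * (Sw * d)) = P⁻¹ * Sv * Sw * (c * d) := by
      intro P Sv Sw c d hcc
      calc P⁻¹ * ((Sv * c) * (Sw * d)) = P⁻¹ * Sv * (c * Sw) * d := by group
        _ = P⁻¹ * Sv * (Sw * c) * d := by rw [← hcc Sw]
        _ = P⁻¹ * Sv * Sw * (c * d) := by group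
    have val_eq : (wordProd gg l (V (x * y)))⁻¹ * (x * y) =
        wq gg l (V x) (V y) *
          (((wordProd gg l (V x))⁻¹ * x) * ((wordProd gg l (V y))⁻¹ * y)) := by
      have h := central_eq (wordProd gg l (V x + V y)) (wordProd gg l (V x))
        (wordProd gg l (V y)) ((wordProd gg l (V x))⁻¹ * x) ((wordProd gg l (V y))⁻¹ * y) hc
      rw [mul_inv_cancel_left, mul_inv_cancel_left] at h
      rw [hV2 x y]
      exact h
    have step1 : (⟨(wordProd gg l (V (x * y)))⁻¹ * (x * y), hV1 (x * y)⟩ : Subgroup.center G)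
        = ⟨wq gg l (V x) (V y), wq_mem h2 gg l (V x) (V y)⟩ *
          (⟨(wordProd gg l (V x))⁻¹ * x, hV1 x⟩ * ⟨(wordProd gg l (V y))⁻¹ * y, hV1 y⟩) := by
      refine Subtype.ext ?_
      rw [Subgroup.coe_mul, Subgroup.coe_mul]
      exact val_eq
    have hzc := Subgroup.mem_center_iff.mp
      (hΦcen ⟨(wordProd gg l (V x))⁻¹ * x, hV1 x⟩)
    have final : ∀ A B C p q : G', (∀ t, t * p = p * t) →
        A * (A⁻¹ * B * C * (p * q)) = B * p * (C * q) := by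
      intro A B C p q hp
      calc A * (A⁻¹ * B * C * (p * q)) = B * (C * p) * q := by group
        _ = B * (p * C) * q := by rw [hp C]
        _ = B * p * (C * q) := by group
    rw [hFdef (x * y), hFdef x, hFdef y, step1, map_mul, map_mul, hV2 x y,
      ← wq_transport h2 h2' Φ gg gg' hbase l (V x) (V y)]
    simp only [wq]
    exact final _ _ _ _ _ hzc
  -- injectivity
  have hker : ∀ x, F x = 1 → x = 1 := by
    intro x hx
    rw [hFdef x] at hx
    have hcen : wordProd gg' l (V x) ∈ Subgroup.center G' := by
      rw [eq_inv_of_mul_eq_one_left hx]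
      exact Subgroup.inv_mem _ (hΦcen _)
    have hv0 := hindep' _ hcen
    have h1 : Φ ⟨(wordProd gg l (V x))⁻¹ * x, hV1 x⟩ = (wordProd gg' l (V x))⁻¹ :=
      eq_inv_of_mul_eq_one_right hx
    have h2z : Φ ⟨(wordProd gg l (V x))⁻¹ * x, hV1 x⟩ = 1 := by
      rw [h1, hv0, wordProd_zero, inv_one]
    have h3 : (⟨(wordProd gg l (V x))⁻¹ * x, hV1 x⟩ : Subgroup.center G) = 1 := by
      apply hΦinj
      rw [h2z, map_one]
    have h4 : (wordProd gg l (V x))⁻¹ * x = 1 := congrArg Subtype.val h3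
    rw [← inv_mul_eq_one.mp h4, hv0, wordProd_zero]
  -- surjectivity
  have hsurj : ∀ x' : G', ∃ x, F x = x' := by
    intro x'
    obtain ⟨z, hz⟩ := hΦsurj _ (hV1' x')
    refine ⟨wordProd gg l (V' x') * (z : G), ?_⟩
    have hVx : V (wordProd gg l (V' x') * (z : G)) = V' x' := by
      rw [hV2, hSV, hVcen _ z.2, add_zero]
    have hmk : (⟨(wordProd gg l (V (wordProd gg l (V' x') * (z : G))))⁻¹ *
        (wordProd gg l (V' x') * (z : G)), hV1 _⟩ : Subgroup.center G) = z := by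
      refine Subtype.ext ?_
      show (wordProd gg l (V (wordProd gg l (V' x') * (z : G))))⁻¹ *
        (wordProd gg l (V' x') * (z : G)) = (z : G)
      rw [hVx]
      group
    rw [hFdef, hmk, hz, hVx, mul_inv_cancel_left]
  exact ⟨MulEquiv.ofBijective (MonoidHom.mk' F hmul)
    ⟨(injective_iff_map_eq_one (MonoidHom.mk' F hmul)).mpr hker, hsurj⟩⟩

end Core
private lemma map_center_le {G G' : Type*} [Group G] [Group G'] (e : G ≃* G') {z : G}
    (hz : z ∈ Subgroup.center G) : e z ∈ Subgroup.center G' := by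
  rw [Subgroup.mem_center_iff]
  intro y
  obtain ⟨u, rfl⟩ := e.surjective y
  rw [← map_mul, ← map_mul, Subgroup.mem_center_iff.mp hz u]

/-- Two torsion-free finitely generated nilpotent groups of class at most 2 are
isomorphic if and only if there are isomorphisms `φ : Z(G) ≃ Z(G')` and
`ψ : G/Z(G) ≃ G'/Z(G')` intertwining the commutator pairings
`c_G(gZ(G), hZ(G)) = [g, h]`, i.e. `c_{G'}(ψ x, ψ y) = φ (c_G(x, y))` for all `x, y`.
The pairing condition is expressed via arbitrary representatives `g, h` of `x, y`. -/
theorem stmt_9 {G G' : Type*} [Group G] [Group G']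
    (hfg : Group.FG G) (hfg' : Group.FG G')
    (htf : ∀ g : G, IsOfFinOrder g → g = 1) (htf' : ∀ g : G', IsOfFinOrder g → g = 1)
    (h2 : ∀ g h : G, ⁅g, h⁆ ∈ Subgroup.center G)
    (h2' : ∀ g h : G', ⁅g, h⁆ ∈ Subgroup.center G') :
    Nonempty (G ≃* G') ↔
      ∃ (φ : Subgroup.center G ≃* Subgroup.center G')
        (ψ : G ⧸ Subgroup.center G ≃* G' ⧸ Subgroup.center G'),
        ∀ (g h : G) (g' h' : G'),
          ψ (QuotientGroup.mk g) = QuotientGroup.mk g' →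
          ψ (QuotientGroup.mk h) = QuotientGroup.mk h' →
          (⁅g', h'⁆ : G') = (φ ⟨⁅g, h⁆, h2 g h⟩ : Subgroup.center G') := by
  constructor
  · rintro ⟨e⟩
    have hmapcen : (Subgroup.center G).map (e : G →* G') = Subgroup.center G' := by
      ext x
      constructor
      · rintro ⟨z, hz, rfl⟩
        exact map_center_le e hz
      · intro hx
        exact ⟨e.symm x, map_center_le e.symm hx, e.apply_symm_apply x⟩
    refine ⟨⟨⟨fun z => ⟨e z.1, map_center_le e z.2⟩,
        fun z => ⟨e.symm z.1, map_center_le e.symm z.2⟩,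
        fun z => Subtype.ext (e.symm_apply_apply z.1),
        fun z => Subtype.ext (e.apply_symm_apply z.1)⟩,
        fun a b => Subtype.ext (map_mul e a.1 b.1)⟩,
      QuotientGroup.congr (Subgroup.center G) (Subgroup.center G') e hmapcen, ?_⟩
    intro g h g' h' hg hh
    rw [QuotientGroup.congr_mk] at hg hh
    have hzg : (e g)⁻¹ * g' ∈ Subgroup.center G' := QuotientGroup.eq.mp hg
    have hzh : (e h)⁻¹ * h' ∈ Subgroup.center G' := QuotientGroup.eq.mp hh
    have hg2 : g' = e g * ((e g)⁻¹ * g') := by group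
    have hh2 : h' = e h * ((e h)⁻¹ * h') := by group
    calc ⁅g', h'⁆ = ⁅e g * ((e g)⁻¹ * g'), e h * ((e h)⁻¹ * h')⁆ := by rw [← hg2, ← hh2]
      _ = ⁅e g, e h⁆ := c2_mul_central h2' _ _ _ _ hzg hzh
      _ = e ⁅g, h⁆ := (map_commutatorElement e g h).symm
  · rintro ⟨φ, ψ, hpair⟩
    haveI := hfg
    -- the quotient is torsion-free
    have hAtf : ∀ (x : G ⧸ Subgroup.center G) (m : ℕ), 0 < m → x ^ m = 1 → x = 1 := by
      intro x m hm hxm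
      obtain ⟨g, rfl⟩ := QuotientGroup.mk_surjective x
      have h1 : ((g ^ m : G) : G ⧸ Subgroup.center G) = 1 := by
        rw [← hxm]
        exact map_pow (QuotientGroup.mk' (Subgroup.center G)) g m
      have hgn : g ^ m ∈ Subgroup.center G := (QuotientGroup.eq_one_iff _).mp h1
      have hcom : ∀ h : G, ⁅g, h⁆ = 1 := by
        intro h
        have hzp := c2_zpow_left h2 g h (m : ℤ)
        rw [zpow_natCast, zpow_natCast] at hzp
        have hpow : ⁅g, h⁆ ^ m = 1 := by
          rw [← hzp]
          exact c2_central_left hgn h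
        exact htf _ (isOfFinOrder_iff_pow_eq_one.mpr ⟨m, hm, hpow⟩)
      rw [QuotientGroup.eq_one_iff, Subgroup.mem_center_iff]
      intro y
      exact (commutatorElement_eq_one_iff_mul_comm.mp (hcom y)).symm
    -- the quotient is commutative
    letI : CommGroup (G ⧸ Subgroup.center G) :=
      { (inferInstance : Group (G ⧸ Subgroup.center G)) with
        mul_comm := by
          intro a b
          obtain ⟨g, rfl⟩ := QuotientGroup.mk_surjective a
          obtain ⟨h, rfl⟩ := QuotientGroup.mk_surjective b
          rw [← QuotientGroup.mk_mul, ← QuotientGroup.mk_mul]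
          apply QuotientGroup.eq.mpr
          rw [show (g * h)⁻¹ * (h * g) = ⁅h⁻¹, g⁻¹⁆ from by
            simp only [commutatorElement_def]; group]
          exact h2 _ _ }
    haveI : Group.FG (G ⧸ Subgroup.center G) :=
      Group.fg_of_surjective (QuotientGroup.mk'_surjective (Subgroup.center G))
    haveI : Module.Finite ℤ (Additive (G ⧸ Subgroup.center G)) :=
      Module.Finite.iff_addGroup_fg.mpr inferInstance
    haveI : NoZeroSMulDivisors ℤ (Additive (G ⧸ Subgroup.center G)) := by
      refine ⟨fun {m x} hnx => ?_⟩
      by_cases hm : m = 0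
      · exact Or.inl hm
      · refine Or.inr ?_
        have ht : (Additive.toMul x) ^ m = 1 := by
          rw [← toMul_zsmul, hnx]; rfl
        have hpow : (Additive.toMul x) ^ m.natAbs = 1 := by
          rcases Int.natAbs_eq m with hcase | hcase
          · rw [← zpow_natCast, ← hcase, ht]
          · have hmn : ((m.natAbs : ℤ)) = -m := by omega
            rw [← zpow_natCast, hmn, zpow_neg, ht, inv_one]
        have hx1 := hAtf (Additive.toMul x) m.natAbs (Int.natAbs_pos.mpr hm) hpow
        exact Additive.toMul.injective (by rw [hx1]; rfl)
    haveI : Module.Free ℤ (Additive (G ⧸ Subgroup.center G)) :=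
      Module.free_of_finite_type_torsion_free'
    obtain ⟨n, ⟨bb⟩⟩ : ∃ m, Nonempty (Module.Basis (Fin m) ℤ (Additive (G ⧸ Subgroup.center G))) :=
      ⟨_, ⟨(Module.Free.chooseBasis ℤ _).reindex (Fintype.equivFin _)⟩⟩
    choose gg hgg using fun i : Fin n => QuotientGroup.mk_surjective (Additive.toMul (bb i))
    choose gg' hgg' using fun i : Fin n =>
      QuotientGroup.mk_surjective (ψ (Additive.toMul (bb i)))
    have hword_toMul : ∀ v : Fin n → ℤ,
        wordProd (fun i => Additive.toMul (bb i)) (List.finRange n) v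
          = Additive.toMul (∑ i, v i • bb i) := by
      intro v
      have h2a : Additive.ofMul (wordProd (fun i => Additive.toMul (bb i)) (List.finRange n) v)
          = ∑ i, v i • bb i := by
        rw [ofMul_wordProd]
        simp only [ofMul_toMul]
        rw [← Fin.sum_univ_def]
      calc wordProd (fun i => Additive.toMul (bb i)) (List.finRange n) v
          = Additive.toMul (Additive.ofMul
              (wordProd (fun i => Additive.toMul (bb i)) (List.finRange n) v)) := rfl
        _ = Additive.toMul (∑ i, v i • bb i) := by rw [h2a]
    have hmkS : ∀ v : Fin n → ℤ, (QuotientGroup.mk (wordProd gg (List.finRange n) v) :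
        G ⧸ Subgroup.center G) = Additive.toMul (∑ i, v i • bb i) := by
      intro v
      have hfun : (fun i => (QuotientGroup.mk' (Subgroup.center G)) (gg i))
          = fun i => Additive.toMul (bb i) := funext fun i => hgg i
      have h1 : (QuotientGroup.mk' (Subgroup.center G)) (wordProd gg (List.finRange n) v)
          = wordProd (fun i => Additive.toMul (bb i)) (List.finRange n) v := by
        rw [wordProd_map, hfun]
      rw [← hword_toMul v]
      exact h1
    have hmk'S : ∀ v : Fin n → ℤ, (QuotientGroup.mk (wordProd gg' (List.finRange n) v) :
        G' ⧸ Subgroup.center G') = ψ (Additive.toMul (∑ i, v i • bb i)) := by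
      intro v
      have hfun : (fun i => (QuotientGroup.mk' (Subgroup.center G')) (gg' i))
          = fun i => ψ (Additive.toMul (bb i)) := funext fun i => hgg' i
      have h1 : (QuotientGroup.mk' (Subgroup.center G')) (wordProd gg' (List.finRange n) v)
          = wordProd (fun i => ψ (Additive.toMul (bb i))) (List.finRange n) v := by
        rw [wordProd_map, hfun]
      have h2b : wordProd (fun i => ψ (Additive.toMul (bb i))) (List.finRange n) v
          = ψ (wordProd (fun i => Additive.toMul (bb i)) (List.finRange n) v) :=
        (wordProd_map ψ.toMonoidHom _ _ v).symm
      rw [← hword_toMul v]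
      rw [h2b] at h1
      exact h1
    obtain ⟨V, hVdef⟩ : ∃ V : G → Fin n → ℤ, ∀ x, V x =
        fun i => bb.repr (Additive.ofMul (QuotientGroup.mk x : G ⧸ Subgroup.center G)) i :=
      ⟨_, fun _ => rfl⟩
    obtain ⟨V', hV'def⟩ : ∃ V' : G' → Fin n → ℤ, ∀ x, V' x =
        fun i => bb.repr (Additive.ofMul
          (ψ.symm (QuotientGroup.mk x : G' ⧸ Subgroup.center G'))) i :=
      ⟨_, fun _ => rfl⟩
    have hmkSV : ∀ x : G, (QuotientGroup.mk (wordProd gg (List.finRange n) (V x)) :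
        G ⧸ Subgroup.center G) = QuotientGroup.mk x := by
      intro x
      rw [hmkS]
      simp only [hVdef]
      rw [Module.Basis.sum_repr]
      rfl
    have hV1 : ∀ x : G, (wordProd gg (List.finRange n) (V x))⁻¹ * x ∈ Subgroup.center G :=
      fun x => QuotientGroup.eq.mp (hmkSV x)
    have hV1' : ∀ x : G', (wordProd gg' (List.finRange n) (V' x))⁻¹ * x
        ∈ Subgroup.center G' := by
      intro x
      apply QuotientGroup.eq.mp
      rw [hmk'S]
      simp only [hV'def]
      rw [Module.Basis.sum_repr]
      rw [show Additive.toMul (Additive.ofMul (ψ.symm (QuotientGroup.mk x)))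
        = ψ.symm (QuotientGroup.mk x) from rfl]
      exact ψ.apply_symm_apply _
    have hV2 : ∀ x y : G, V (x * y) = V x + V y := by
      intro x y
      funext i
      simp only [hVdef, Pi.add_apply]
      rw [QuotientGroup.mk_mul, ofMul_mul, map_add, Finsupp.add_apply]
    have hSV : ∀ v : Fin n → ℤ, V (wordProd gg (List.finRange n) v) = v := by
      intro v
      funext i
      simp only [hVdef]
      rw [hmkS]
      rw [show Additive.ofMul (Additive.toMul (∑ i, v i • bb i)) = ∑ i, v i • bb i from rfl]
      exact congrFun (bb.repr_sum_self v) i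
    have hVcen : ∀ c ∈ Subgroup.center G, V c = 0 := by
      intro c hc
      funext i
      simp only [hVdef]
      rw [(QuotientGroup.eq_one_iff c).mpr hc]
      simp
    have hindep' : ∀ v : Fin n → ℤ,
        wordProd gg' (List.finRange n) v ∈ Subgroup.center G' → v = 0 := by
      intro v hv
      have h1 : (QuotientGroup.mk (wordProd gg' (List.finRange n) v) :
          G' ⧸ Subgroup.center G') = 1 := (QuotientGroup.eq_one_iff _).mpr hv
      rw [hmk'S] at h1
      have h2c : Additive.toMul (∑ i, v i • bb i) = (1 : G ⧸ Subgroup.center G) :=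
        ψ.injective (by rw [h1, map_one])
      have h3 : (∑ i, v i • bb i) = 0 := Additive.toMul.injective (by rw [h2c]; rfl)
      have h4 := bb.repr_sum_self v
      rw [h3, map_zero, Finsupp.coe_zero] at h4
      exact h4.symm
    have hΦcen : ∀ z, ((Subgroup.center G').subtype.comp φ.toMonoidHom) z
        ∈ Subgroup.center G' := fun z => (φ z).2
    have hΦinj : Function.Injective ((Subgroup.center G').subtype.comp φ.toMonoidHom) := by
      intro a b hab
      exact φ.injective (Subtype.ext hab)
    have hΦsurj : ∀ w ∈ Subgroup.center G',
        ∃ z, ((Subgroup.center G').subtype.comp φ.toMonoidHom) z = w := by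
      intro w hw
      refine ⟨φ.symm ⟨w, hw⟩, ?_⟩
      show ((φ (φ.symm ⟨w, hw⟩) : Subgroup.center G') : G') = w
      rw [MulEquiv.apply_symm_apply]
    have hbase : ∀ i j, ⁅gg' i, gg' j⁆ =
        ((Subgroup.center G').subtype.comp φ.toMonoidHom) ⟨⁅gg i, gg j⁆, h2 _ _⟩ := by
      intro i j
      refine hpair (gg i) (gg j) (gg' i) (gg' j) ?_ ?_
      · rw [hgg i]; exact (hgg' i).symm
      · rw [hgg j]; exact (hgg' j).symm
    exact backward_core h2 h2' gg gg' ((Subgroup.center G').subtype.comp φ.toMonoidHom)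
      hΦcen hΦinj hΦsurj hbase V V' hV1 hV1' hV2 hSV hVcen hindep'
end

section
/- Let G be a torsion-free nilpotent group. Then the quotient group G/Z(G) of G by its centre is torsion-free. -/
lemma comm_pow_aux {G : Type*} [Group G] (k : ℕ) (x y : G)
    (hx : x ∈ Subgroup.upperCentralSeries G (k + 2)) :
    ∀ n : ℕ, ∃ u ∈ Subgroup.upperCentralSeries G k,
      x ^ n * y * (x ^ n)⁻¹ * y⁻¹ = u * (x * y * x⁻¹ * y⁻¹) ^ n := by
  intro n
  induction n with
  | zero => exact ⟨1, one_mem _, by simp⟩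
  | succ n ih =>
    obtain ⟨v, hv, hveq⟩ := ih
    have hxn : x ^ n ∈ Subgroup.upperCentralSeries G (k + 2) := pow_mem hx n
    have hc : x ^ n * y * (x ^ n)⁻¹ * y⁻¹ ∈ Subgroup.upperCentralSeries G (k + 1) :=
      (mem_upperCentralSeries_succ_iff).mp hxn y
    have hu : x * (x ^ n * y * (x ^ n)⁻¹ * y⁻¹) * x⁻¹ * (x ^ n * y * (x ^ n)⁻¹ * y⁻¹)⁻¹ ∈
        Subgroup.upperCentralSeries G k := by
      have := inv_mem ((mem_upperCentralSeries_succ_iff).mp hc x)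
      simpa [mul_assoc, commutatorElement_def] using this
    refine ⟨x * (x ^ n * y * (x ^ n)⁻¹ * y⁻¹) * x⁻¹ * (x ^ n * y * (x ^ n)⁻¹ * y⁻¹)⁻¹ * v,
      mul_mem hu hv, ?_⟩
    have h1 : x ^ (n + 1) * y * (x ^ (n + 1))⁻¹ * y⁻¹
        = x * (x ^ n * y * (x ^ n)⁻¹ * y⁻¹) * x⁻¹ * (x * y * x⁻¹ * y⁻¹) := by
      rw [pow_succ']; group
    rw [h1, pow_succ, hveq]
    group

lemma ucs_factor_tf {G : Type*} [Group G] (htf : ∀ g : G, IsOfFinOrder g → g = 1) :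
    ∀ i : ℕ, ∀ x : G, ∀ n : ℕ, 0 < n → x ∈ Subgroup.upperCentralSeries G (i + 1) →
      x ^ n ∈ Subgroup.upperCentralSeries G i → x ∈ Subgroup.upperCentralSeries G i := by
  intro i
  induction i with
  | zero =>
    intro x n hn _ hxn
    rw [upperCentralSeries_zero, Subgroup.mem_bot] at hxn ⊢
    exact htf x (isOfFinOrder_iff_pow_eq_one.mpr ⟨n, hn, hxn⟩)
  | succ k ih =>
    intro x n hn hx hxn
    rw [mem_upperCentralSeries_succ_iff]
    intro y
    obtain ⟨u, hu, hueq⟩ := comm_pow_aux k x y hx n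
    have hcn : x ^ n * y * (x ^ n)⁻¹ * y⁻¹ ∈ Subgroup.upperCentralSeries G k :=
      (mem_upperCentralSeries_succ_iff).mp hxn y
    have hpow : (x * y * x⁻¹ * y⁻¹) ^ n ∈ Subgroup.upperCentralSeries G k := by
      have : (x * y * x⁻¹ * y⁻¹) ^ n = u⁻¹ * (x ^ n * y * (x ^ n)⁻¹ * y⁻¹) := by
        rw [hueq]; group
      rw [this]
      exact mul_mem (inv_mem hu) hcn
    exact ih _ n hn ((mem_upperCentralSeries_succ_iff).mp hx y) hpow

lemma pow_in_center {G : Type*} [Group G] (htf : ∀ g : G, IsOfFinOrder g → g = 1) :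
    ∀ j : ℕ, ∀ x : G, ∀ n : ℕ, 0 < n → x ∈ Subgroup.upperCentralSeries G (j + 1) →
      x ^ n ∈ Subgroup.upperCentralSeries G 1 → x ∈ Subgroup.upperCentralSeries G 1 := by
  intro j
  induction j with
  | zero => intro x n _ hx _; exact hx
  | succ k ih =>
    intro x n hn hx hxn
    have hx' : x ∈ Subgroup.upperCentralSeries G (k + 1) :=
      ucs_factor_tf htf (k + 1) x n hn hx
        (upperCentralSeries_mono G (Nat.one_le_iff_ne_zero.mpr (Nat.succ_ne_zero k)) hxn)
    exact ih x n hn hx' hxn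

/-- **The quotient of a torsion-free nilpotent group by its centre is torsion-free.** -/
theorem stmt_10 {G : Type*} [Group G] [Group.IsNilpotent G]
    (htf : ∀ g : G, IsOfFinOrder g → g = 1) :
    ∀ x : G ⧸ Subgroup.center G, IsOfFinOrder x → x = 1 := by
  intro xbar hfin
  obtain ⟨x, rfl⟩ := QuotientGroup.mk_surjective xbar
  obtain ⟨n, hn, hxn⟩ := hfin.exists_pow_eq_one
  have hxnc : x ^ n ∈ Subgroup.center G := by
    rw [← QuotientGroup.eq_one_iff, QuotientGroup.mk_pow]
    exact hxn
  have htop : x ∈ Subgroup.upperCentralSeries G (Group.nilpotencyClass G) := by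
    rw [upperCentralSeries_nilpotencyClass]; trivial
  have hx1 : x ∈ Subgroup.upperCentralSeries G 1 := by
    rw [← upperCentralSeries_one] at hxnc
    exact pow_in_center htf (Group.nilpotencyClass G) x n hn
      (upperCentralSeries_mono G (Nat.le_succ _) htop) hxnc
  rw [upperCentralSeries_one] at hx1
  rw [QuotientGroup.eq_one_iff]
  exact hx1
end

section
/- Let G be a torsion-free group and let N be a normal nilpotent subgroup of finite index in G which is maximal among normal nilpotent finite-index subgroups of G (i.e., every normal nilpotent finite-index subgroup of G containing N equals N). Then every element of G with finite conjugacy class lies in Z(N) = {n ∈ N | nm = mn for all m ∈ N}; that is, the FC-centre of G equals Z(N). -/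
open Subgroup Pointwise
open scoped commutatorElement

universe u

private lemma conj_pow_eq {H : Type*} [Group H] {x y c : H}
    (hc : x * y * x⁻¹ = c * y) (hcent : c ∈ Subgroup.center H) (k : ℕ) :
    x ^ k * y * (x ^ k)⁻¹ = c ^ k * y := by
  induction k with
  | zero => simp
  | succ k ih =>
    have hck : x * c ^ k = c ^ k * x :=
      Subgroup.mem_center_iff.mp (pow_mem hcent k) x
    calc x ^ (k + 1) * y * (x ^ (k + 1))⁻¹
        = x * (x ^ k * y * (x ^ k)⁻¹) * x⁻¹ := by group
      _ = x * (c ^ k * y) * x⁻¹ := by rw [ih]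
      _ = (x * c ^ k) * y * x⁻¹ := by rw [mul_assoc x (c ^ k) y]
      _ = c ^ k * (x * y * x⁻¹) := by rw [hck, mul_assoc, mul_assoc, mul_assoc]
      _ = c ^ k * (c * y) := by rw [hc]
      _ = c ^ (k + 1) * y := by rw [pow_succ, mul_assoc]

private lemma key_step {H : Type*} [Group H]
    (htfZ : ∀ z ∈ Subgroup.center H, ∀ k : ℕ, k ≠ 0 → z ^ k = 1 → z = 1)
    {x : H} {k : ℕ} (hk : k ≠ 0) (hxk : x ^ k ∈ Subgroup.center H)
    (hcomm : ∀ y : H, x * y * x⁻¹ * y⁻¹ ∈ Subgroup.center H) :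
    x ∈ Subgroup.center H := by
  rw [Subgroup.mem_center_iff]
  intro y
  have hc : x * y * x⁻¹ = (x * y * x⁻¹ * y⁻¹) * y := by group
  have h1 := conj_pow_eq hc (hcomm y) k
  have h2 : x ^ k * y * (x ^ k)⁻¹ = y := by
    rw [mul_inv_eq_iff_eq_mul]
    exact (Subgroup.mem_center_iff.mp hxk y).symm
  have hck : (x * y * x⁻¹ * y⁻¹) ^ k = 1 := mul_eq_right.mp (h1.symm.trans h2)
  have hc1 : x * y * x⁻¹ * y⁻¹ = 1 := htfZ _ (hcomm y) k hk hck
  calc y * x = (x * y * x⁻¹ * y⁻¹)⁻¹ * (x * y) := by group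
    _ = x * y := by rw [hc1]; group


private lemma comm_mem_center_of_mk_central {H : Type*} [Group H] {x : H}
    (hx : (QuotientGroup.mk x : H ⧸ Subgroup.center H) ∈
      Subgroup.center (H ⧸ Subgroup.center H)) (y : H) :
    x * y * x⁻¹ * y⁻¹ ∈ Subgroup.center H := by
  rw [← QuotientGroup.eq_one_iff]
  have h := Subgroup.mem_center_iff.mp hx (QuotientGroup.mk y)
  have h2 : (QuotientGroup.mk (x * y * x⁻¹ * y⁻¹) : H ⧸ Subgroup.center H) =
      QuotientGroup.mk x * QuotientGroup.mk y *
        (QuotientGroup.mk x)⁻¹ * (QuotientGroup.mk y)⁻¹ := rfl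
  rw [h2, ← h]
  group

private lemma center_isolated (n : ℕ) : ∀ {H : Type u} [Group H] [Group.IsNilpotent H],
    Group.nilpotencyClass H ≤ n →
    (∀ z ∈ Subgroup.center H, ∀ k : ℕ, k ≠ 0 → z ^ k = 1 → z = 1) →
    ∀ x : H, ∀ k : ℕ, k ≠ 0 → x ^ k ∈ Subgroup.center H → x ∈ Subgroup.center H := by
  induction n with
  | zero =>
    intro H _ _ hcls _ x k hk hxk
    have hsub : Subsingleton H :=
      _root_.nilpotencyClass_zero_iff_subsingleton.mp (Nat.le_zero.mp hcls)
    rw [Subsingleton.elim x 1]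
    exact (Subgroup.center H).one_mem
  | succ n ih =>
    intro H _ _ hcls htfZ x k hk hxk
    have hQcls : Group.nilpotencyClass (H ⧸ Subgroup.center H) ≤ n := by
      rw [_root_.nilpotencyClass_quotient_center]; omega
    have hQtfZ : ∀ z ∈ Subgroup.center (H ⧸ Subgroup.center H),
        ∀ m : ℕ, m ≠ 0 → z ^ m = 1 → z = 1 := by
      intro z hz m hm hzm
      revert hz hzm
      refine QuotientGroup.induction_on z ?_
      intro z hz hzm
      have hzk : z ^ m ∈ Subgroup.center H := by
        rw [← QuotientGroup.eq_one_iff]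
        exact hzm
      have hz' := key_step htfZ hm hzk (comm_mem_center_of_mk_central hz)
      exact (QuotientGroup.eq_one_iff z).mpr hz'
    have hxQ : (QuotientGroup.mk x : H ⧸ Subgroup.center H) ∈
        Subgroup.center (H ⧸ Subgroup.center H) := by
      refine ih hQcls hQtfZ _ k hk ?_
      have : ((QuotientGroup.mk x : H ⧸ Subgroup.center H)) ^ k = 1 :=
        (QuotientGroup.eq_one_iff _).mpr hxk
      rw [this]
      exact Subgroup.one_mem _
    exact key_step htfZ hk hxk (comm_mem_center_of_mk_central hxQ)

private lemma nilpotent_unique_roots (n : ℕ) : ∀ {H : Type u} [Group H] [Group.IsNilpotent H],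
    Group.nilpotencyClass H ≤ n →
    (∀ h : H, ∀ k : ℕ, k ≠ 0 → h ^ k = 1 → h = 1) →
    ∀ a b : H, ∀ k : ℕ, k ≠ 0 → a ^ k = b ^ k → a = b := by
  induction n with
  | zero =>
    intro H _ _ hcls _ a b k hk hab
    have hsub : Subsingleton H :=
      _root_.nilpotencyClass_zero_iff_subsingleton.mp (Nat.le_zero.mp hcls)
    exact Subsingleton.elim a b
  | succ n ih =>
    intro H _ _ hcls htf a b k hk hab
    have htfZ : ∀ z ∈ Subgroup.center H, ∀ m : ℕ, m ≠ 0 → z ^ m = 1 → z = 1 :=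
      fun z _ => htf z
    have hQcls : Group.nilpotencyClass (H ⧸ Subgroup.center H) ≤ n := by
      rw [_root_.nilpotencyClass_quotient_center]; omega
    have hQtf : ∀ h : H ⧸ Subgroup.center H, ∀ m : ℕ, m ≠ 0 → h ^ m = 1 → h = 1 := by
      intro h m hm hhm
      revert hhm
      refine QuotientGroup.induction_on h ?_
      intro h hhm
      have h1 : h ^ m ∈ Subgroup.center H := by
        rw [← QuotientGroup.eq_one_iff]
        exact hhm
      have h2 := center_isolated (n + 1) hcls htfZ h m hm h1
      exact (QuotientGroup.eq_one_iff _).mpr h2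
    have hmk : (QuotientGroup.mk a : H ⧸ Subgroup.center H) = QuotientGroup.mk b := by
      refine ih hQcls hQtf _ _ k hk ?_
      show (QuotientGroup.mk (a ^ k) : H ⧸ Subgroup.center H) = QuotientGroup.mk (b ^ k)
      rw [hab]
    have hz : a⁻¹ * b ∈ Subgroup.center H := (QuotientGroup.eq).mp hmk
    have hcommaz : Commute a (a⁻¹ * b) := (Subgroup.mem_center_iff.mp hz a)
    have hpow := hcommaz.mul_pow k
    have hab' : a * (a⁻¹ * b) = b := by group
    rw [hab'] at hpow
    rw [hab] at hpow
    have h1 : (a⁻¹ * b) ^ k = 1 := (left_eq_mul.mp hpow)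
    exact inv_mul_eq_one.mp (htf _ k hk h1)

private lemma subgroup_tf {G : Type*} [Group G] (htf : ∀ g : G, IsOfFinOrder g → g = 1)
    (N : Subgroup G) : ∀ h : ↥N, ∀ k : ℕ, k ≠ 0 → h ^ k = 1 → h = 1 := by
  intro h k hk h1
  have h2 : (h : G) ^ k = 1 := by
    have := congrArg (Subgroup.subtype N) h1
    simpa using this
  have h3 := htf h (isOfFinOrder_iff_pow_eq_one.mpr ⟨k, Nat.pos_of_ne_zero hk, h2⟩)
  exact Subtype.ext (by rw [h3]; rfl)

private lemma fc_fi {G : Type*} [Group G] {g : G} (h : {h : G | IsConj g h}.Finite) :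
    (Subgroup.centralizer {g}).FiniteIndex := by
  haveI := h.to_subtype
  let f : G ⧸ Subgroup.centralizer {g} → {h : G | IsConj g h} := fun q =>
    Quotient.liftOn' q (fun x => ⟨x * g * x⁻¹, isConj_iff.mpr ⟨x, rfl⟩⟩)
      (by
        intro x y hxy
        have hxy' : x⁻¹ * y ∈ Subgroup.centralizer {g} :=
          (QuotientGroup.leftRel_apply).mp hxy
        have hc : (x⁻¹ * y) * g = g * (x⁻¹ * y) :=
          Subgroup.mem_centralizer_singleton_iff.mp hxy'
        apply Subtype.ext
        show x * g * x⁻¹ = y * g * y⁻¹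
        calc x * g * x⁻¹ = x * (g * (x⁻¹ * y)) * (x⁻¹ * y)⁻¹ * x⁻¹ := by group
          _ = x * ((x⁻¹ * y) * g) * (x⁻¹ * y)⁻¹ * x⁻¹ := by rw [hc]
          _ = y * g * y⁻¹ := by group)
  haveI : Finite (G ⧸ Subgroup.centralizer {g}) := by
    refine Finite.of_injective f ?_
    intro q1 q2 hq
    revert hq
    refine Quotient.inductionOn₂' q1 q2 ?_
    intro x y hq
    have hv : x * g * x⁻¹ = y * g * y⁻¹ := congrArg Subtype.val hq
    apply Quotient.sound'
    rw [QuotientGroup.leftRel_apply]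
    rw [Subgroup.mem_centralizer_singleton_iff]
    calc x⁻¹ * y * g = x⁻¹ * (y * g * y⁻¹) * y := by group
      _ = x⁻¹ * (x * g * x⁻¹) * y := by rw [hv]
      _ = g * (x⁻¹ * y) := by group
  exact Subgroup.finiteIndex_of_finite_quotient (H := Subgroup.centralizer {g})


private lemma fc_centralizes {G : Type*} [Group G] (htf : ∀ g : G, IsOfFinOrder g → g = 1)
    {N : Subgroup G} (hNnormal : N.Normal) (hNnil : Group.IsNilpotent N)
    {g : G} (hg : {h : G | IsConj g h}.Finite) :
    g ∈ Subgroup.centralizer (N : Set G) := by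
  rw [Subgroup.mem_centralizer_iff]
  intro n hn
  have hC := fc_fi hg
  obtain ⟨k, hk0, -, hnk⟩ :=
    Subgroup.exists_pow_mem_of_index_ne_zero hC.index_ne_zero n
  have hcom : n ^ k * g = g * n ^ k := Subgroup.mem_centralizer_singleton_iff.mp hnk
  haveI := hNnil
  have hab : (⟨g * n * g⁻¹, hNnormal.conj_mem n hn g⟩ : ↥N) ^ k = (⟨n, hn⟩ : ↥N) ^ k := by
    apply Subtype.ext
    rw [SubmonoidClass.coe_pow, SubmonoidClass.coe_pow]
    show (g * n * g⁻¹) ^ k = n ^ k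
    have h1 : (g * n * g⁻¹) ^ k = g * n ^ k * g⁻¹ := by
      rw [show g * n * g⁻¹ = (MulAut.conj g) n from rfl, ← map_pow]
      rfl
    rw [h1, ← hcom]
    group
  have h2 := nilpotent_unique_roots (Group.nilpotencyClass ↥N) le_rfl
    (subgroup_tf htf N) _ _ k hk0.ne' hab
  have hv : g * n * g⁻¹ = n := congrArg Subtype.val h2
  calc n * g = (g * n * g⁻¹) * g := by rw [hv]
    _ = g * n := by group

private lemma comm_shift_left {K : Type*} [Group K] {a b z : K}
    (hz : z ∈ Subgroup.center K) : ⁅a * z, b⁆ = ⁅a, b⁆ := by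
  have hzb : z * b * z⁻¹ = b := by
    rw [show z * b = b * z from (Subgroup.mem_center_iff.mp hz b).symm, mul_inv_cancel_right]
  calc ⁅a * z, b⁆ = a * (z * b * z⁻¹) * a⁻¹ * b⁻¹ := by
        rw [commutatorElement_def]; group
    _ = a * b * a⁻¹ * b⁻¹ := by rw [hzb]
    _ = ⁅a, b⁆ := (commutatorElement_def a b).symm

private lemma comm_shift_right {K : Type*} [Group K] {a b w : K}
    (hw : w ∈ Subgroup.center K) : ⁅a, b * w⁆ = ⁅a, b⁆ := by
  have hwa : w * a⁻¹ * w⁻¹ = a⁻¹ := by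
    rw [show w * a⁻¹ = a⁻¹ * w from (Subgroup.mem_center_iff.mp hw a⁻¹).symm,
      mul_inv_cancel_right]
  calc ⁅a, b * w⁆ = a * b * (w * a⁻¹ * w⁻¹) * b⁻¹ := by
        rw [commutatorElement_def]; group
    _ = a * b * a⁻¹ * b⁻¹ := by rw [hwa]
    _ = ⁅a, b⁆ := (commutatorElement_def a b).symm

private lemma finite_commutatorSet_of_finite_center_quot {K : Type*} [Group K]
    [Finite (K ⧸ Subgroup.center K)] : Finite (commutatorSet K) := by
  have hsub : commutatorSet K ⊆ Set.range
      (fun p : (K ⧸ Subgroup.center K) × (K ⧸ Subgroup.center K) =>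
        ⁅Quotient.out p.1, Quotient.out p.2⁆) := by
    rintro x ⟨a, b, rfl⟩
    refine ⟨(QuotientGroup.mk a, QuotientGroup.mk b), ?_⟩
    show ⁅Quotient.out (QuotientGroup.mk a : K ⧸ Subgroup.center K),
      Quotient.out (QuotientGroup.mk b : K ⧸ Subgroup.center K)⁆ = ⁅a, b⁆
    have ha : (QuotientGroup.mk a : K ⧸ Subgroup.center K) =
        QuotientGroup.mk (Quotient.out (QuotientGroup.mk a : K ⧸ Subgroup.center K)) :=
      (QuotientGroup.out_eq' _).symm
    have hb : (QuotientGroup.mk b : K ⧸ Subgroup.center K) =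
        QuotientGroup.mk (Quotient.out (QuotientGroup.mk b : K ⧸ Subgroup.center K)) :=
      (QuotientGroup.out_eq' _).symm
    have hza : a⁻¹ * Quotient.out (QuotientGroup.mk a : K ⧸ Subgroup.center K) ∈
        Subgroup.center K := QuotientGroup.eq.mp ha
    have hzb : b⁻¹ * Quotient.out (QuotientGroup.mk b : K ⧸ Subgroup.center K) ∈
        Subgroup.center K := QuotientGroup.eq.mp hb
    rw [show Quotient.out (QuotientGroup.mk a : K ⧸ Subgroup.center K) =
      a * (a⁻¹ * Quotient.out (QuotientGroup.mk a : K ⧸ Subgroup.center K)) by group]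
    rw [show Quotient.out (QuotientGroup.mk b : K ⧸ Subgroup.center K) =
      b * (b⁻¹ * Quotient.out (QuotientGroup.mk b : K ⧸ Subgroup.center K)) by group]
    rw [comm_shift_left hza, comm_shift_right hzb]
  exact ((Set.finite_range _).subset hsub).to_subtype

private lemma centralizer_abelian {G : Type*} [Group G]
    (htf : ∀ g : G, IsOfFinOrder g → g = 1) (N : Subgroup G) [N.FiniteIndex]
    {a b : G} (ha : a ∈ Subgroup.centralizer (N : Set G))
    (hb : b ∈ Subgroup.centralizer (N : Set G)) : a * b = b * a := by
  set C := Subgroup.centralizer (N : Set G) with hCdef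
  have hcent : N.subgroupOf C ≤ Subgroup.center ↥C := by
    intro x hx
    rw [Subgroup.mem_center_iff]
    intro y
    apply Subtype.ext
    show (y : G) * x = x * y
    exact (y.2 (x : G) (Subgroup.mem_subgroupOf.mp hx)).symm
  haveI : (N.subgroupOf C).FiniteIndex := Subgroup.instFiniteIndex_subgroupOf N C
  haveI : (Subgroup.center ↥C).FiniteIndex := Subgroup.finiteIndex_of_le hcent
  haveI : Finite (↥C ⧸ Subgroup.center ↥C) := Subgroup.finite_quotient_of_finiteIndex
  haveI := finite_commutatorSet_of_finite_center_quot (K := ↥C)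
  have he : (⁅(⟨a, ha⟩ : ↥C), (⟨b, hb⟩ : ↥C)⁆ : ↥C) ∈ commutator ↥C :=
    Subgroup.commutator_mem_commutator (Subgroup.mem_top _) (Subgroup.mem_top _)
  have hfo : IsOfFinOrder (⟨_, he⟩ : ↥(commutator ↥C)) := isOfFinOrder_of_finite _
  obtain ⟨m, hm0, hm⟩ := isOfFinOrder_iff_pow_eq_one.mp hfo
  have h1 : ((⁅(⟨a, ha⟩ : ↥C), (⟨b, hb⟩ : ↥C)⁆ : ↥C) : G) ^ m = 1 := by
    have h2 : (⁅(⟨a, ha⟩ : ↥C), (⟨b, hb⟩ : ↥C)⁆ : ↥C) ^ m = 1 := by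
      have := congrArg (Subgroup.subtype _) hm
      simpa using this
    have := congrArg (Subgroup.subtype _) h2
    simpa using this
  have he1 : ((⁅(⟨a, ha⟩ : ↥C), (⟨b, hb⟩ : ↥C)⁆ : ↥C) : G) = 1 :=
    htf _ (isOfFinOrder_iff_pow_eq_one.mpr ⟨m, hm0, h1⟩)
  have h3 : a * b * a⁻¹ * b⁻¹ = 1 := he1
  calc a * b = (a * b * a⁻¹ * b⁻¹) * (b * a) := by group
    _ = b * a := by rw [h3, one_mul]

private lemma centralizer_normal {G : Type*} [Group G] (N : Subgroup G) (hN : N.Normal) :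
    (Subgroup.centralizer (N : Set G)).Normal := by
  constructor
  intro x hx h
  rw [Subgroup.mem_centralizer_iff] at hx ⊢
  intro n hn
  have h1 : h⁻¹ * n * h ∈ N := by
    have := hN.conj_mem n hn h⁻¹
    simpa using this
  have h2 := hx _ h1
  calc n * (h * x * h⁻¹) = h * ((h⁻¹ * n * h) * x) * h⁻¹ := by group
    _ = h * (x * (h⁻¹ * n * h)) * h⁻¹ := by rw [h2]
    _ = (h * x * h⁻¹) * n := by group
/-- Let `G` be a torsion-free group and `N` a normal nilpotent finite-index subgroup of
`G` which is maximal among normal nilpotent finite-index subgroups.  Then the FC-centre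
of `G` (the set of elements with finite conjugacy class) equals
`Z(N) = {n ∈ N | n` commutes with every element of `N}`. -/
theorem stmt_11 {G : Type*} [Group G] (htf : ∀ g : G, IsOfFinOrder g → g = 1)
    (N : Subgroup G) (hNnormal : N.Normal) (hNnil : Group.IsNilpotent N)
    (hNfi : N.FiniteIndex)
    (hmax : ∀ M : Subgroup G, M.Normal → Group.IsNilpotent M → M.FiniteIndex →
      N ≤ M → M = N) :
    {g : G | {h : G | IsConj g h}.Finite} =
      {g : G | g ∈ N ∧ ∀ m ∈ N, g * m = m * g} := by
  haveI := hNnormal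
  haveI := hNfi
  -- the centralizer of N
  set C := Subgroup.centralizer (N : Set G) with hCdef
  haveI hCnormal : C.Normal := centralizer_normal N hNnormal
  -- M := N ⊔ C is a normal nilpotent finite-index subgroup containing N
  set M := N ⊔ C with hMdef
  have hNM : N ≤ M := le_sup_left
  have hCM : C ≤ M := le_sup_right
  have hMset : (M : Set G) = (N : Set G) * (C : Set G) := Subgroup.normal_mul N C
  have hcomm : ∀ c ∈ C, ∀ m ∈ M, m * c = c * m := by
    intro c hc m hm
    have hm' : m ∈ (N : Set G) * (C : Set G) := by rw [← hMset]; exact hm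
    obtain ⟨n, hn, c', hc', rfl⟩ := hm'
    have h1 : n * c = c * n := hc n hn
    have h2 : c' * c = c * c' := centralizer_abelian htf N hc' hc
    calc n * c' * c = n * (c * c') := by rw [mul_assoc, h2]
      _ = c * (n * c') := by rw [← mul_assoc, h1, mul_assoc]
  have hMnil : Group.IsNilpotent ↥M := by
    haveI := hNnil
    set φ : ↥N →* ↥M ⧸ Subgroup.center ↥M :=
      (QuotientGroup.mk' _).comp (Subgroup.inclusion hNM) with hφ
    have hsurj : Function.Surjective φ := by
      intro q
      refine QuotientGroup.induction_on q ?_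
      intro m
      have hm' : (m : G) ∈ (N : Set G) * (C : Set G) := by rw [← hMset]; exact m.2
      obtain ⟨n, hn, c, hc, hnc⟩ := hm'
      refine ⟨⟨n, hn⟩, ?_⟩
      show QuotientGroup.mk (Subgroup.inclusion hNM ⟨n, hn⟩) = QuotientGroup.mk m
      rw [QuotientGroup.eq]
      have hval : ((Subgroup.inclusion hNM ⟨n, hn⟩)⁻¹ * m : ↥M) = ⟨c, hCM hc⟩ := by
        apply Subtype.ext
        show n⁻¹ * (m : G) = c
        rw [← hnc]
        group
      rw [hval, Subgroup.mem_center_iff]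
      intro y
      apply Subtype.ext
      show (y : G) * c = c * y
      exact hcomm c hc y y.2
    have h := nilpotent_of_surjective φ hsurj
    exact of_quotient_center_nilpotent h
  have hMfi : M.FiniteIndex := Subgroup.finiteIndex_of_le hNM
  have hM : M = N := hmax M (Subgroup.sup_normal N C) hMnil hMfi hNM
  have hCN : C ≤ N := hM ▸ hCM
  -- now prove the set equality
  ext g
  simp only [Set.mem_setOf_eq]
  constructor
  · intro hg
    have hgC : g ∈ C := fc_centralizes htf hNnormal hNnil hg
    refine ⟨hCN hgC, ?_⟩
    intro m hm
    exact (Subgroup.mem_centralizer_iff.mp hgC m hm).symm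
  · rintro ⟨hgN, hgc⟩
    let f : G ⧸ N → G := fun q =>
      Quotient.liftOn' q (fun x => x * g * x⁻¹)
        (by
          intro x y hxy
          have hm : x⁻¹ * y ∈ N := QuotientGroup.leftRel_apply.mp hxy
          have hc : g * (x⁻¹ * y) = (x⁻¹ * y) * g := hgc _ hm
          show x * g * x⁻¹ = y * g * y⁻¹
          calc x * g * x⁻¹ = x * (g * (x⁻¹ * y)) * (x⁻¹ * y)⁻¹ * x⁻¹ := by group
            _ = x * ((x⁻¹ * y) * g) * (x⁻¹ * y)⁻¹ * x⁻¹ := by rw [hc]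
            _ = y * g * y⁻¹ := by group)
    apply Set.Finite.subset (Set.finite_range f)
    intro h hh
    obtain ⟨x, hx⟩ := isConj_iff.mp hh
    exact ⟨QuotientGroup.mk x, hx⟩
end

section
/- Let G be a group, let N be a normal subgroup of G which is torsion-free and nilpotent, and let g ∈ G be such that the set C = {g h g⁻¹ h⁻¹ | h ∈ N} is finite. Then C = {e}; that is, g commutes with every element of N. -/
open Subgroup

/-- If `c = a*b*a⁻¹*b⁻¹` commutes with everything, then `aⁿ*b*a⁻ⁿ*b⁻¹ = cⁿ`. -/
private lemma conj_comm_pow {K : Type*} [Group K] (a b : K)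
    (hc : ∀ z : K, (a * b * a⁻¹ * b⁻¹) * z = z * (a * b * a⁻¹ * b⁻¹)) (n : ℕ) :
    a ^ n * b * (a ^ n)⁻¹ * b⁻¹ = (a * b * a⁻¹ * b⁻¹) ^ n := by
  set c := a * b * a⁻¹ * b⁻¹ with hcdef
  induction n with
  | zero => simp
  | succ k ih =>
      have hca : Commute c a := hc a
      have hk : c ^ k * a = a * c ^ k := (hca.pow_left k).eq
      calc a ^ (k + 1) * b * (a ^ (k + 1))⁻¹ * b⁻¹
          = a * (a ^ k * b * (a ^ k)⁻¹ * b⁻¹) * (b * a⁻¹ * b⁻¹) := by group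
        _ = a * c ^ k * (b * a⁻¹ * b⁻¹) := by rw [ih]
        _ = c ^ k * a * (b * a⁻¹ * b⁻¹) := by rw [← hk]
        _ = c ^ k * c := by rw [hcdef]; group
        _ = c ^ (k + 1) := (pow_succ c k).symm

/-- Key inductive lemma: in a torsion-free group, the terms of the upper
central series are "isolated": if `x ∈ Z_{i+1}` and `xⁿ ∈ Z_i` (with `n > 0`) then `x ∈ Z_i`. -/
private lemma ucs_isolated {K : Type*} [Group K]
    (htf : ∀ z : K, ∀ n : ℕ, 0 < n → z ^ n = 1 → z = 1) :
    ∀ i : ℕ, ∀ x : K, ∀ n : ℕ, 0 < n → x ∈ Subgroup.upperCentralSeries K (i + 1) →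
      x ^ n ∈ Subgroup.upperCentralSeries K i → x ∈ Subgroup.upperCentralSeries K i := by
  intro i
  induction i with
  | zero =>
      intro x n hn _ hxn
      rw [Subgroup.upperCentralSeries_zero, Subgroup.mem_bot] at hxn ⊢
      exact htf x n hn hxn
  | succ i ih =>
      intro x n hn hx1 hxn
      rw [Subgroup.mem_upperCentralSeries_succ_iff]
      intro y
      set Zi := Subgroup.upperCentralSeries K i with hZi
      have : (Subgroup.upperCentralSeries K i).Normal := inferInstance
      set c := x * y * x⁻¹ * y⁻¹ with hc
      have hcmem : c ∈ Subgroup.upperCentralSeries K (i + 1) :=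
        (Subgroup.mem_upperCentralSeries_succ_iff.mp hx1) y
      -- pass to the quotient K ⧸ Z_i
      let π : K →* K ⧸ Zi := QuotientGroup.mk' Zi
      have central : ∀ z : K, z ∈ Subgroup.upperCentralSeries K (i + 1) →
          ∀ q : K ⧸ Zi, π z * q = q * π z := by
        intro z hz q
        induction q using QuotientGroup.induction_on with
        | H w =>
          have hw : z * w * z⁻¹ * w⁻¹ ∈ Zi := (Subgroup.mem_upperCentralSeries_succ_iff.mp hz) w
          have h1 : π (z * w * z⁻¹ * w⁻¹) = 1 := (QuotientGroup.eq_one_iff _).mpr hw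
          have h2 : π z * π w * (π z)⁻¹ * (π w)⁻¹ = 1 := by
            simpa [map_mul, map_inv] using h1
          exact commutatorElement_eq_one_iff_mul_comm.mp h2
      -- c maps to a central element, so the commutator power identity applies
      have hpic : π x * π y * (π x)⁻¹ * (π y)⁻¹ = π c := by simp [hc, map_mul, map_inv]
      have hkey : (π x) ^ n * (π y) * ((π x) ^ n)⁻¹ * (π y)⁻¹
          = (π x * π y * (π x)⁻¹ * (π y)⁻¹) ^ n := by
        apply conj_comm_pow
        intro z
        rw [hpic]
        exact central c hcmem z
      have hxc : ∀ q : K ⧸ Zi, π (x ^ n) * q = q * π (x ^ n) := central _ hxn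
      have hl : (π x) ^ n * (π y) * ((π x) ^ n)⁻¹ * (π y)⁻¹ = 1 := by
        rw [show (π x) ^ n = π (x ^ n) by simp [map_pow], hxc (π y)]
        group
      have hcn : (π c) ^ n = 1 := by
        rw [hpic] at hkey
        rw [← hkey, hl]
      have hcnZ : c ^ n ∈ Zi := by
        rw [← QuotientGroup.eq_one_iff (G := K) (N := Zi)]
        rw [QuotientGroup.mk_pow]; exact hcn
      exact ih c n hn hcmem hcnZ

/-- In a torsion-free nilpotent group, the center is isolated. -/
private lemma center_isolated_s12 {K : Type*} [Group K] [Group.IsNilpotent K]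
    (htf : ∀ z : K, ∀ n : ℕ, 0 < n → z ^ n = 1 → z = 1)
    (x : K) (n : ℕ) (hn : 0 < n) (hx : x ^ n ∈ Subgroup.center K) :
    x ∈ Subgroup.center K := by
  obtain ⟨d, hd⟩ := Group.IsNilpotent.nilpotent K
  rw [← Subgroup.upperCentralSeries_one] at hx ⊢
  have key : ∀ j : ℕ, x ∈ Subgroup.upperCentralSeries K (j + 1) → x ∈ Subgroup.upperCentralSeries K 1 := by
    intro j
    induction j with
    | zero => exact fun h => h
    | succ j ihj =>
        intro hxj
        apply ihj
        apply ucs_isolated htf (j + 1) x n hn hxj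
        exact Subgroup.upperCentralSeries_mono K (Nat.one_le_iff_ne_zero.mpr (Nat.succ_ne_zero j)) hx
  apply key d
  have hxd : x ∈ Subgroup.upperCentralSeries K d := by rw [hd]; trivial
  exact Subgroup.upperCentralSeries_mono K (Nat.le_succ d) hxd

/-- Unique roots in a torsion-free nilpotent group. -/
private lemma unique_roots {K : Type*} [Group K] [Group.IsNilpotent K]
    (htf : ∀ z : K, ∀ n : ℕ, 0 < n → z ^ n = 1 → z = 1)
    (a b : K) (n : ℕ) (hn : 0 < n) (hab : a ^ n = b ^ n) : a = b := by
  set H := Subgroup.closure ({a, b} : Set K) with hH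
  have ha : a ∈ H := Subgroup.subset_closure (by simp)
  have hb : b ∈ H := Subgroup.subset_closure (by simp)
  have htfH : ∀ z : ↥H, ∀ m : ℕ, 0 < m → z ^ m = 1 → z = 1 := by
    intro z m hm hz
    have hzc : (z : K) ^ m = 1 := by
      have := congrArg (Subtype.val) hz
      push_cast at this
      simpa using this
    exact Subtype.ext (htf z m hm hzc)
  -- a^n is central in H
  have hcomm : ∀ w ∈ H, w * a ^ n = a ^ n * w := by
    intro w hw
    induction hw using Subgroup.closure_induction with
    | mem z hz =>
        rcases hz with rfl | rfl
        · exact ((Commute.refl z).pow_right n).eq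
        · rw [hab]; exact ((Commute.refl z).pow_right n).eq
    | one => simp
    | mul u v hu hv ihu ihv => rw [mul_assoc, ihv, ← mul_assoc, ihu, mul_assoc]
    | inv u hu ihu =>
        have h := congrArg (fun t => u⁻¹ * t * u⁻¹) ihu
        simpa [mul_assoc] using h.symm
  have hcentral : (⟨a, ha⟩ : ↥H) ^ n ∈ Subgroup.center ↥H := by
    rw [Subgroup.mem_center_iff]
    intro w
    apply Subtype.ext
    push_cast
    exact hcomm (w : K) w.2
  have hain : (⟨a, ha⟩ : ↥H) ∈ Subgroup.center ↥H := center_isolated_s12 htfH _ n hn hcentral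
  have hab' : a * b = b * a := by
    have h1 := (Subgroup.mem_center_iff.mp hain) ⟨b, hb⟩
    have h2 := congrArg Subtype.val h1
    push_cast at h2
    exact h2.symm
  have hcab : Commute a b := hab'
  have hfin : (a⁻¹ * b) ^ n = 1 := by
    have h3 : (a⁻¹ * b) ^ n = a⁻¹ ^ n * b ^ n := (hcab.symm.inv_right.symm.mul_pow n)
    rw [h3, inv_pow, ← hab, inv_mul_cancel]
  have h4 := htf (a⁻¹ * b) n hn hfin
  rw [inv_mul_eq_one] at h4
  exact h4

/-- Let `N` be a normal, torsion-free, nilpotent subgroup of a group `G` and let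
`g ∈ G` be such that the set `C = {g h g⁻¹ h⁻¹ | h ∈ N}` is finite.  Then `C = {e}`;
that is, `g` commutes with every element of `N`. -/
theorem stmt_12 {G : Type*} [Group G] (N : Subgroup G) (hN : N.Normal)
    (htf : ∀ n ∈ N, IsOfFinOrder n → n = 1) (hnil : Group.IsNilpotent N)
    (g : G) (hfin : {x : G | ∃ h ∈ N, x = g * h * g⁻¹ * h⁻¹}.Finite) :
    {x : G | ∃ h ∈ N, x = g * h * g⁻¹ * h⁻¹} = {1} := by
  haveI := hnil
  have htfN : ∀ z : ↥N, ∀ m : ℕ, 0 < m → z ^ m = 1 → z = 1 := by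
    intro z m hm hz
    have hcoe : (z : G) ^ m = 1 := by
      have := congrArg Subtype.val hz
      push_cast at this
      simpa using this
    have hfo : IsOfFinOrder (z : G) := isOfFinOrder_iff_pow_eq_one.mpr ⟨m, hm, hcoe⟩
    exact Subtype.ext (htf (z : G) z.2 hfo)
  ext x
  simp only [Set.mem_setOf_eq, Set.mem_singleton_iff]
  constructor
  · rintro ⟨h, hh, rfl⟩
    suffices hgh : g * h * g⁻¹ = h by rw [hgh, mul_inv_cancel]
    -- consider the sequence n ↦ g * hⁿ * g⁻¹ * h⁻ⁿ, all in the finite set C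
    set f : ℕ → G := fun n => g * h ^ n * g⁻¹ * (h ^ n)⁻¹ with hf
    have hmem : ∀ n : ℕ, f n ∈ {x : G | ∃ h ∈ N, x = g * h * g⁻¹ * h⁻¹} :=
      fun n => ⟨h ^ n, pow_mem hh n, rfl⟩
    have hnoninj : ¬ Function.Injective f := by
      intro hinj
      exact Set.infinite_of_injective_forall_mem hinj hmem hfin
    rw [Function.not_injective_iff] at hnoninj
    obtain ⟨m, n, hmn, hne⟩ := hnoninj
    -- from f m = f n with m < n, extract k > 0 with (g h g⁻¹)^k = h^k
    have key : ∀ m n : ℕ, m < n → f m = f n → (g * h * g⁻¹) ^ (n - m) = h ^ (n - m) := by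
      intro m n hlt heq
      set k := n - m with hk
      have hnm : n = m + k := by omega
      have hcj : ∀ j : ℕ, f j = (g * h * g⁻¹) ^ j * (h ^ j)⁻¹ := by
        intro j
        rw [hf]
        simp only []
        rw [conj_pow]
      rw [hcj m, hcj n] at heq
      rw [hnm, pow_add, pow_add, mul_inv_rev] at heq
      rw [mul_assoc ((g * h * g⁻¹) ^ m)] at heq
      have h3 := mul_left_cancel heq
      rw [← mul_assoc] at h3
      have h4 : (1 : G) * (h ^ m)⁻¹ = ((g * h * g⁻¹) ^ k * (h ^ k)⁻¹) * (h ^ m)⁻¹ := by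
        rw [one_mul]; exact h3
      have h5 := mul_right_cancel h4
      rw [eq_comm, mul_inv_eq_one] at h5
      exact h5
    have main : ∃ k : ℕ, 0 < k ∧ (g * h * g⁻¹) ^ k = h ^ k := by
      rcases lt_or_gt_of_ne hne with hlt | hlt
      · exact ⟨n - m, by omega, key m n hlt hmn⟩
      · exact ⟨m - n, by omega, key n m hlt hmn.symm⟩
    obtain ⟨k, hk, hpow⟩ := main
    -- lift to N and use unique roots
    have haN : g * h * g⁻¹ ∈ N := hN.conj_mem h hh g
    have heqN : (⟨g * h * g⁻¹, haN⟩ : ↥N) ^ k = (⟨h, hh⟩ : ↥N) ^ k := by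
      apply Subtype.ext
      push_cast
      exact hpow
    have hfinal := unique_roots htfN _ _ k hk heqN
    exact congrArg Subtype.val hfinal
  · intro hx
    exact ⟨1, one_mem N, by rw [hx]; group⟩
end

section
/- Let G be a group, let N be a normal nilpotent subgroup of G, and let C denote the centralizer of N in G. If C is abelian, then the subgroup H generated by C and N is nilpotent and its centre equals C, i.e., Z(H) = C. -/
open Pointwise


/-- Let `N` be a normal nilpotent subgroup of a group `G` and let `C` be the centralizer
of `N` in `G`.  If `C` is abelian, then the subgroup `H` generated by `C` and `N`
(i.e. `C ⊔ N`) is nilpotent and its centre equals `C`. -/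
theorem stmt_13 {G : Type*} [Group G] (N : Subgroup G) (hN : N.Normal)
    (hnil : Group.IsNilpotent N)
    (hab : ∀ a b : G, a ∈ Subgroup.centralizer (N : Set G) →
      b ∈ Subgroup.centralizer (N : Set G) → a * b = b * a) :
    Group.IsNilpotent ↥(Subgroup.centralizer (N : Set G) ⊔ N) ∧
      (Subgroup.center ↥(Subgroup.centralizer (N : Set G) ⊔ N)).map
        (Subgroup.centralizer (N : Set G) ⊔ N).subtype
        = Subgroup.centralizer (N : Set G) := by
  set C := Subgroup.centralizer (N : Set G) with hC
  set H := C ⊔ N with hH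
  -- every element of C (viewed in H) is central in H
  have hCcent : ∀ (x : ↥H), (x : G) ∈ C → x ∈ Subgroup.center ↥H := by
    intro x hx
    rw [Subgroup.mem_center_iff]
    intro y
    have hyC : (y : G) ∈ Subgroup.centralizer {(x : G)} := by
      have hle : C ⊔ N ≤ Subgroup.centralizer {(x : G)} := by
        refine sup_le ?_ ?_
        · intro c hc
          rw [Subgroup.mem_centralizer_singleton_iff]
          exact hab _ _ hc hx
        · intro n hn
          rw [Subgroup.mem_centralizer_singleton_iff]
          exact hx n hn
      exact hle y.2
    rw [Subgroup.mem_centralizer_singleton_iff] at hyC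
    exact Subtype.ext hyC
  have hCH : C ≤ H := le_sup_left
  constructor
  · -- nilpotency
    haveI := hN
    haveI := hnil
    have hsurj : Function.Surjective
        ((QuotientGroup.mk' (Subgroup.center ↥H)).comp
          (Subgroup.inclusion (le_sup_right : N ≤ H))) := by
      intro q
      obtain ⟨h, rfl⟩ := QuotientGroup.mk_surjective q
      have hmem : (h : G) ∈ (C : Set G) * (N : Set G) := by
        rw [← Subgroup.mul_normal C N]
        exact h.2
      obtain ⟨c, hc, n, hn, hcn⟩ := hmem
      refine ⟨⟨n, hn⟩, ?_⟩
      simp only [MonoidHom.comp_apply, QuotientGroup.mk'_apply]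
      rw [QuotientGroup.eq]
      apply hCcent
      have hval : (((Subgroup.inclusion (le_sup_right : N ≤ H) ⟨n, hn⟩)⁻¹ * h : ↥H) : G)
          = n⁻¹ * (h : G) := rfl
      have hkey : n⁻¹ * (h : G) = c := by
        rw [← hcn]; show n⁻¹ * (c * n) = c; rw [← hc n hn]; group
      rw [hval, hkey]; exact hc
    exact of_quotient_center_nilpotent
      (nilpotent_of_surjective _ hsurj)
  · -- centre equals C
    apply le_antisymm
    · rintro x ⟨y, hy, rfl⟩
      intro n hn
      have := (Subgroup.mem_center_iff.mp hy) ⟨n, (le_sup_right : N ≤ H) hn⟩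
      simpa using congrArg (Subtype.val) this
    · intro c hc
      exact ⟨⟨c, hCH hc⟩, hCcent _ hc, rfl⟩
end
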